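/- Let x, y be rational functions with real coefficients, not both constant, and let z' = x' + i·y' be the corresponding derivative, a nonzero rational function with complex coefficients (coefficients of x', y' mapped into ℂ). Assume that all complex roots of the numerator of z' and all complex roots of the denominator of z' are real. Then there exist real numbers a, b, c with (a, b) ≠ (0, 0) such that a·x + b·y = c as rational functions; in particular, the image of the curve t ↦ (x(t), y(t)) is contained in a straight line. -/

import Mathlib

open Polynomial

/-- Formal derivative of a rational function, via the quotient rule on
numerator and denominator. -/
noncomputable def RatFunc.deriv' {K : Type*} [Field K] (q : RatFunc K) : RatFunc K :=
  algebraMap K[X] (RatFunc K)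
      (Polynomial.derivative q.num * q.denom - q.num * Polynomial.derivative q.denom) /
    algebraMap K[X] (RatFunc K) (q.denom ^ 2)

/-- The ring homomorphism `RatFunc K →+* RatFunc L` acting on coefficients via `φ`. -/
noncomputable def RatFunc.coeffMap {K L : Type*} [Field K] [Field L] (φ : K →+* L) :
    RatFunc K →+* RatFunc L :=
  RatFunc.mapRingHom (Polynomial.mapRingHom φ)
    (nonZeroDivisors_le_comap_nonZeroDivisors_of_injective _
      (Polynomial.map_injective φ φ.injective))

namespace RatFunc

variable {K L : Type*} [Field K] [Field L]

lemma coeffMap_div (φ : K →+* L) (p q : K[X]) :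
    RatFunc.coeffMap φ (algebraMap K[X] (RatFunc K) p / algebraMap K[X] (RatFunc K) q) =
      algebraMap L[X] (RatFunc L) (p.map φ) / algebraMap L[X] (RatFunc L) (q.map φ) :=
  RatFunc.map_apply_div (Polynomial.mapRingHom φ)
    (nonZeroDivisors_le_comap_nonZeroDivisors_of_injective _
      (Polynomial.map_injective φ φ.injective)) p q

lemma coeffMap_algebraMap (φ : K →+* L) (p : K[X]) :
    RatFunc.coeffMap φ (algebraMap K[X] (RatFunc K) p) =
      algebraMap L[X] (RatFunc L) (p.map φ) := by
  have := coeffMap_div φ p 1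
  simpa using this

lemma coeffMap_C (φ : K →+* L) (a : K) :
    RatFunc.coeffMap φ (RatFunc.C a) = RatFunc.C (φ a) := by
  rw [← algebraMap_C, coeffMap_algebraMap, Polynomial.map_C, algebraMap_C]

lemma deriv'_div {n d : K[X]} (hd : d ≠ 0) :
    RatFunc.deriv' (algebraMap K[X] (RatFunc K) n / algebraMap K[X] (RatFunc K) d) =
      algebraMap K[X] (RatFunc K) (derivative n * d - n * derivative d) /
        algebraMap K[X] (RatFunc K) (d ^ 2) := by
  set q : RatFunc K := algebraMap K[X] (RatFunc K) n / algebraMap K[X] (RatFunc K) d with hq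
  have hd' : algebraMap K[X] (RatFunc K) d ≠ 0 := algebraMap_ne_zero hd
  have hD' : algebraMap K[X] (RatFunc K) q.denom ≠ 0 := algebraMap_ne_zero q.denom_ne_zero
  have h0 : algebraMap K[X] (RatFunc K) n / algebraMap K[X] (RatFunc K) d
      = algebraMap K[X] (RatFunc K) q.num / algebraMap K[X] (RatFunc K) q.denom := by
    rw [num_div_denom]
  rw [div_eq_div_iff hd' hD', ← map_mul, ← map_mul] at h0
  have h1 : n * q.denom = q.num * d := algebraMap_injective K h0
  have h2 : derivative n * q.denom + n * derivative q.denom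
      = derivative q.num * d + q.num * derivative d := by
    have := congrArg derivative h1
    rwa [derivative_mul, derivative_mul] at this
  unfold RatFunc.deriv'
  rw [div_eq_div_iff (algebraMap_ne_zero (pow_ne_zero 2 q.denom_ne_zero))
      (algebraMap_ne_zero (pow_ne_zero 2 hd)), ← map_mul, ← map_mul]
  congr 1
  linear_combination (-(d * q.denom)) * h2 + (derivative d * q.denom + d * derivative q.denom) * h1

lemma deriv'_add (x y : RatFunc K) : (x + y).deriv' = x.deriv' + y.deriv' := by
  have hx' : algebraMap K[X] (RatFunc K) x.denom ≠ 0 := algebraMap_ne_zero x.denom_ne_zero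
  have hy' : algebraMap K[X] (RatFunc K) y.denom ≠ 0 := algebraMap_ne_zero y.denom_ne_zero
  have hsum : x + y = algebraMap K[X] (RatFunc K) (x.num * y.denom + y.num * x.denom) /
      algebraMap K[X] (RatFunc K) (x.denom * y.denom) := by
    conv_lhs => rw [← x.num_div_denom, ← y.num_div_denom]
    rw [div_add_div _ _ hx' hy', map_add, map_mul, map_mul, map_mul]
    congr 1
    ring
  rw [hsum, deriv'_div (mul_ne_zero x.denom_ne_zero y.denom_ne_zero)]
  unfold RatFunc.deriv'
  simp only [derivative_add, derivative_mul, map_add, map_mul, map_sub, map_pow]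
  field_simp
  ring

lemma deriv'_C_mul (a : K) (x : RatFunc K) :
    (RatFunc.C a * x).deriv' = RatFunc.C a * x.deriv' := by
  have h : RatFunc.C a * x = algebraMap K[X] (RatFunc K) (Polynomial.C a * x.num) /
      algebraMap K[X] (RatFunc K) x.denom := by
    conv_lhs => rw [← x.num_div_denom]
    rw [map_mul, algebraMap_C, mul_div_assoc]
  rw [h, deriv'_div x.denom_ne_zero]
  unfold RatFunc.deriv'
  rw [← algebraMap_C]
  simp only [derivative_mul, derivative_C, zero_mul, zero_add, map_sub, map_mul, map_pow]
  field_simp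

lemma eq_C_of_deriv'_eq_zero [CharZero K] {x : RatFunc K} (h : x.deriv' = 0) :
    ∃ c, x = RatFunc.C c := by
  unfold RatFunc.deriv' at h
  rw [_root_.div_eq_zero_iff] at h
  have h0 : derivative x.num * x.denom = x.num * derivative x.denom := by
    rcases h with h | h
    · have := algebraMap_injective K (by simpa using h :
        algebraMap K[X] (RatFunc K) (derivative x.num * x.denom - x.num * derivative x.denom) =
          algebraMap K[X] (RatFunc K) 0)
      linear_combination this
    · exact absurd h (algebraMap_ne_zero (pow_ne_zero 2 x.denom_ne_zero))
  have hcop := x.isCoprime_num_denom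
  have hdeg : x.denom.natDegree = 0 := by
    by_contra hne
    have hdvd : x.denom ∣ derivative x.denom := by
      refine hcop.symm.dvd_of_dvd_mul_left ?_
      exact ⟨derivative x.num, by linear_combination -h0⟩
    have hd0 : derivative x.denom ≠ 0 := by
      intro h'
      exact hne (Polynomial.natDegree_eq_zero_of_derivative_eq_zero h')
    have := Polynomial.natDegree_le_of_dvd hdvd hd0
    have := Polynomial.natDegree_derivative_lt hne
    omega
  have hdone : x.denom = 1 := by
    have := Polynomial.eq_C_of_natDegree_eq_zero hdeg
    have hm := x.monic_denom
    rw [this] at hm ⊢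
    rw [Polynomial.Monic.def, Polynomial.leadingCoeff_C] at hm
    rw [hm, Polynomial.C_1]
  have hnum0 : derivative x.num = 0 := by
    rw [hdone] at h0
    simpa using h0
  obtain ⟨c, hc⟩ : ∃ c, x.num = Polynomial.C c :=
    ⟨_, Polynomial.eq_C_of_natDegree_eq_zero
      (Polynomial.natDegree_eq_zero_of_derivative_eq_zero hnum0)⟩
  refine ⟨c, ?_⟩
  rw [← x.num_div_denom, hdone, hc, map_one, div_one, algebraMap_C]

end RatFunc

theorem line_of_real_singularities
    (x y : RatFunc ℝ)
    (hnc : ¬ ((∃ c : ℝ, x = RatFunc.C c) ∧ (∃ c : ℝ, y = RatFunc.C c)))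
    (z' : RatFunc ℂ)
    (hz' : z' = RatFunc.coeffMap (algebraMap ℝ ℂ) x.deriv' +
      RatFunc.C Complex.I * RatFunc.coeffMap (algebraMap ℝ ℂ) y.deriv')
    (hnum : ∀ w : ℂ, z'.num.IsRoot w → w.im = 0)
    (hden : ∀ w : ℂ, z'.denom.IsRoot w → w.im = 0) :
    ∃ a b c : ℝ, (a, b) ≠ (0, 0) ∧
      RatFunc.C a * x + RatFunc.C b * y = RatFunc.C c := by
  classical
  haveI : CharZero (RatFunc ℝ) :=
    charZero_of_injective_algebraMap (algebraMap ℝ (RatFunc ℝ)).injective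
  set f := RatFunc.coeffMap (algebraMap ℝ ℂ) with hf
  set g := RatFunc.coeffMap (starRingEnd ℂ) with hg
  have hfinj : Function.Injective f := RingHom.injective f
  have hconj : (starRingEnd ℂ).comp (algebraMap ℝ ℂ) = algebraMap ℝ ℂ :=
    RingHom.ext fun r => by simp [Complex.conj_ofReal]
  have hgf : ∀ w : RatFunc ℝ, g (f w) = f w := by
    intro w
    conv_lhs => rw [← w.num_div_denom]
    conv_rhs => rw [← w.num_div_denom]
    rw [hf, hg, RatFunc.coeffMap_div, RatFunc.coeffMap_div,
      Polynomial.map_map, Polynomial.map_map, hconj]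
  -- factorization of z'
  set c := z'.num.leadingCoeff with hcdef
  have hNsplit : z'.num = Polynomial.C c *
      (z'.num.roots.map fun a => X - Polynomial.C a).prod :=
    (IsAlgClosed.splits z'.num).eq_prod_roots
  have hDsplit : z'.denom = (z'.denom.roots.map fun a => X - Polynomial.C a).prod :=
    (IsAlgClosed.splits z'.denom).eq_prod_roots_of_monic z'.monic_denom
  set P : ℝ[X] := (z'.num.roots.map fun a => X - Polynomial.C a.re).prod with hP
  set Q : ℝ[X] := (z'.denom.roots.map fun a => X - Polynomial.C a.re).prod with hQ
  have hPmap : P.map (algebraMap ℝ ℂ) = (z'.num.roots.map fun a => X - Polynomial.C a).prod := by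
    rw [hP, Polynomial.map_multiset_prod, Multiset.map_map]
    congr 1
    refine Multiset.map_congr rfl fun a ha => ?_
    have him : a.im = 0 := hnum a (Polynomial.isRoot_of_mem_roots ha)
    rw [Function.comp_apply, Polynomial.map_sub, Polynomial.map_X, Polynomial.map_C]
    congr 1
    congr 1
    exact Complex.ext (by simp) (by simp [him])
  have hQmap : Q.map (algebraMap ℝ ℂ) =
      (z'.denom.roots.map fun a => X - Polynomial.C a).prod := by
    rw [hQ, Polynomial.map_multiset_prod, Multiset.map_map]
    congr 1
    refine Multiset.map_congr rfl fun a ha => ?_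
    have him : a.im = 0 := hden a (Polynomial.isRoot_of_mem_roots ha)
    rw [Function.comp_apply, Polynomial.map_sub, Polynomial.map_X, Polynomial.map_C]
    congr 1
    congr 1
    exact Complex.ext (by simp) (by simp [him])
  set R : RatFunc ℝ := algebraMap ℝ[X] (RatFunc ℝ) P / algebraMap ℝ[X] (RatFunc ℝ) Q with hR
  have hfR : f R = algebraMap ℂ[X] (RatFunc ℂ) (P.map (algebraMap ℝ ℂ)) /
      algebraMap ℂ[X] (RatFunc ℂ) (Q.map (algebraMap ℝ ℂ)) := by
    rw [hR, hf]; exact RatFunc.coeffMap_div _ P Q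
  have hz'fact : z' = RatFunc.C c * f R := by
    conv_lhs => rw [← z'.num_div_denom]
    rw [hfR, hPmap, hQmap]
    conv_lhs => rw [hNsplit]
    conv_lhs => rw [show z'.denom = (z'.denom.roots.map fun a => X - Polynomial.C a).prod
      from hDsplit]
    rw [map_mul, RatFunc.algebraMap_C, mul_div_assoc]
  -- conjugate equation
  have h1 : f x.deriv' + RatFunc.C Complex.I * f y.deriv' = RatFunc.C c * f R :=
    hz'.symm.trans hz'fact
  have h2 : f x.deriv' - RatFunc.C Complex.I * f y.deriv' =
      RatFunc.C ((starRingEnd ℂ) c) * f R := by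
    have e1 : g z' = RatFunc.C ((starRingEnd ℂ) c) * f R := by
      rw [hz'fact, map_mul, hg, RatFunc.coeffMap_C, ← hg, hgf]
    have e2 : g z' = f x.deriv' - RatFunc.C Complex.I * f y.deriv' := by
      rw [hz', map_add, map_mul, hg, RatFunc.coeffMap_C, ← hg, hgf, hgf, Complex.conj_I,
        map_neg]
      ring
    exact e2.symm.trans e1
  -- extract real and imaginary parts
  have hCI_ne : (RatFunc.C Complex.I : RatFunc ℂ) ≠ 0 := by
    intro h
    exact Complex.I_ne_zero ((RingHom.injective (RatFunc.C : ℂ →+* RatFunc ℂ))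
      (by rw [h, map_zero]))
  have hx' : x.deriv' = RatFunc.C c.re * R := by
    have hsum : RatFunc.C c + RatFunc.C ((starRingEnd ℂ) c) =
        2 * RatFunc.C (algebraMap ℝ ℂ c.re) := by
      rw [← map_ofNat (RatFunc.C : ℂ →+* RatFunc ℂ) 2, ← map_add, ← map_mul]
      congr 1
      rw [Complex.add_conj]
      simp
    have key : (2 : RatFunc ℂ) * f x.deriv' =
        2 * (RatFunc.C (algebraMap ℝ ℂ c.re) * f R) := by
      linear_combination h1 + h2 + f R * hsum
    have key2 : f (2 * x.deriv') = f (2 * (RatFunc.C c.re * R)) := by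
      rw [map_mul, map_mul, map_mul, hf, RatFunc.coeffMap_C, ← hf, map_ofNat]
      exact key
    have := hfinj key2
    exact mul_left_cancel₀ (two_ne_zero : (2 : RatFunc ℝ) ≠ 0) this
  have hy' : y.deriv' = RatFunc.C c.im * R := by
    have hsub : RatFunc.C c - RatFunc.C ((starRingEnd ℂ) c) =
        2 * RatFunc.C (algebraMap ℝ ℂ c.im) * RatFunc.C Complex.I := by
      rw [← map_ofNat (RatFunc.C : ℂ →+* RatFunc ℂ) 2, ← map_sub, ← map_mul, ← map_mul]
      congr 1
      rw [Complex.sub_conj]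
      simp
    have key : RatFunc.C Complex.I * ((2 : RatFunc ℂ) * f y.deriv') =
        RatFunc.C Complex.I * (2 * (RatFunc.C (algebraMap ℝ ℂ c.im) * f R)) := by
      linear_combination h1 - h2 + f R * hsub
    have key' := mul_left_cancel₀ hCI_ne key
    have key2 : f (2 * y.deriv') = f (2 * (RatFunc.C c.im * R)) := by
      rw [map_mul, map_mul, map_mul, hf, RatFunc.coeffMap_C, ← hf, map_ofNat]
      exact key'
    have := hfinj key2
    exact mul_left_cancel₀ (two_ne_zero : (2 : RatFunc ℝ) ≠ 0) this
  by_cases hc0 : c = 0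
  · exfalso
    apply hnc
    constructor
    · exact RatFunc.eq_C_of_deriv'_eq_zero (by rw [hx', hc0]; simp)
    · exact RatFunc.eq_C_of_deriv'_eq_zero (by rw [hy', hc0]; simp)
  · have hw : (RatFunc.C c.im * x + RatFunc.C (-c.re) * y).deriv' = 0 := by
      rw [RatFunc.deriv'_add, RatFunc.deriv'_C_mul, RatFunc.deriv'_C_mul, hx', hy', map_neg]
      ring
    obtain ⟨c₀, hc₀⟩ := RatFunc.eq_C_of_deriv'_eq_zero hw
    refine ⟨c.im, -c.re, c₀, ?_, hc₀⟩
    intro h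
    rw [Prod.mk.injEq] at h
    exact hc0 (Complex.ext (by simpa [neg_eq_zero] using h.2) (by simpa using h.1))
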